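/- Suppose R* > 0 is such that for every R ≥ R* the first exit time t₁(R) is finite and x_R(t₁(R)) = 0. Then sup { x_R(t) : 0 < t < t₁(R), R* ≤ R ≤ R* + 1 } < +∞. -/

import Mathlib

/-- The arc-length system (1.5): `x' = cos θ`, `r' = sin θ`,
`θ' = ((n-1)/r - (r/2) f'(x²+r²)) cos θ + (x/2) f'(x²+r²) sin θ` on the set `s`. -/
def SolvesSystem (n : ℕ) (f : ℝ → ℝ) (x r θ : ℝ → ℝ) (s : Set ℝ) : Prop :=
  ∀ t ∈ s,
    HasDerivAt x (Real.cos (θ t)) t ∧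
    HasDerivAt r (Real.sin (θ t)) t ∧
    HasDerivAt θ
      ((((n : ℝ) - 1) / r t - r t / 2 * deriv f (x t ^ 2 + r t ^ 2)) * Real.cos (θ t)
        + x t / 2 * deriv f (x t ^ 2 + r t ^ 2) * Real.sin (θ t)) t

/-- None of the exit events `θ = 0`, `θ = -π`, `x = 0`, `r = 0` occurs on `s`. -/
def NoExit (x r θ : ℝ → ℝ) (s : Set ℝ) : Prop :=
  ∀ t ∈ s, θ t ≠ 0 ∧ θ t ≠ -Real.pi ∧ x t ≠ 0 ∧ r t ≠ 0

open Set Filter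
open scoped Topology NNReal

namespace SupXAux

/-- The vector field of the arclength system, as a map on `ℝ × ℝ × ℝ`. -/
noncomputable def vf (n : ℕ) (F : ℝ → ℝ) (p : ℝ × ℝ × ℝ) : ℝ × ℝ × ℝ :=
  (Real.cos p.2.2, Real.sin p.2.2,
    (((n : ℝ) - 1) / p.2.1 - p.2.1 / 2 * F (p.1 ^ 2 + p.2.1 ^ 2)) * Real.cos p.2.2
      + p.1 / 2 * F (p.1 ^ 2 + p.2.1 ^ 2) * Real.sin p.2.2)

lemma vf_contDiffOn (n : ℕ) {F : ℝ → ℝ} (hF : ContDiff ℝ 1 F) :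
    ContDiffOn ℝ 1 (vf n F) {p : ℝ × ℝ × ℝ | 0 < p.2.1} := by
  have hx : ContDiff ℝ 1 (fun p : ℝ × ℝ × ℝ => p.1) := contDiff_fst
  have hr : ContDiff ℝ 1 (fun p : ℝ × ℝ × ℝ => p.2.1) := contDiff_fst.comp contDiff_snd
  have hth : ContDiff ℝ 1 (fun p : ℝ × ℝ × ℝ => p.2.2) := contDiff_snd.comp contDiff_snd
  have hq : ContDiff ℝ 1 (fun p : ℝ × ℝ × ℝ => F (p.1 ^ 2 + p.2.1 ^ 2)) :=
    hF.comp ((hx.pow 2).add (hr.pow 2))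
  have hcos : ContDiff ℝ 1 (fun p : ℝ × ℝ × ℝ => Real.cos p.2.2) := Real.contDiff_cos.comp hth
  have hsin : ContDiff ℝ 1 (fun p : ℝ × ℝ × ℝ => Real.sin p.2.2) := Real.contDiff_sin.comp hth
  refine ContDiffOn.prodMk hcos.contDiffOn (ContDiffOn.prodMk hsin.contDiffOn ?_)
  refine ContDiffOn.add (ContDiffOn.mul (ContDiffOn.sub ?_ ?_) hcos.contDiffOn) ?_
  · exact ContDiffOn.div contDiffOn_const hr.contDiffOn (fun p hp => ne_of_gt hp)
  · exact ((hr.div_const 2).mul hq).contDiffOn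
  · exact (((hx.div_const 2).mul hq).mul hsin).contDiffOn

lemma vf_lipschitzOnWith (n : ℕ) {F : ℝ → ℝ} (hF : ContDiff ℝ 1 F)
    {K : Set (ℝ × ℝ × ℝ)} (hKconv : Convex ℝ K) (hKcomp : IsCompact K)
    (hKsub : K ⊆ {p : ℝ × ℝ × ℝ | 0 < p.2.1}) :
    ∃ L : NNReal, LipschitzOnWith L (vf n F) K := by
  have hU : IsOpen {p : ℝ × ℝ × ℝ | 0 < p.2.1} :=
    isOpen_lt continuous_const (continuous_fst.comp continuous_snd)
  have hv := vf_contDiffOn n hF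
  have hdiff : ∀ p ∈ K, DifferentiableAt ℝ (vf n F) p := fun p hp =>
    (hv.differentiableOn one_ne_zero).differentiableAt (hU.mem_nhds (hKsub hp))
  have hfd : ContinuousOn (fderiv ℝ (vf n F)) {p : ℝ × ℝ × ℝ | 0 < p.2.1} :=
    hv.continuousOn_fderiv_of_isOpen hU le_rfl
  obtain ⟨C, hC⟩ := hKcomp.exists_bound_of_continuousOn (hfd.mono hKsub)
  refine ⟨⟨max C 0, le_max_right _ _⟩, ?_⟩
  apply Convex.lipschitzOnWith_of_nnnorm_fderiv_le hdiff ?_ hKconv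
  intro p hp
  change ‖fderiv ℝ (vf n F) p‖ ≤ max C 0
  exact (hC p hp).trans (le_max_left _ _)

lemma cos_neg_of_mem {γ : ℝ}
    (h : γ ∈ Ioo (-Real.pi) (-(Real.pi/2)) ∪ Ioo (Real.pi/2) (3*Real.pi/2)) :
    Real.cos γ < 0 := by
  have hπ := Real.pi_pos
  rcases h with h | h
  · rw [← Real.cos_neg]
    exact Real.cos_neg_of_pi_div_two_lt_of_lt (by linarith [h.2]) (by linarith [h.1])
  · exact Real.cos_neg_of_pi_div_two_lt_of_lt h.1 (by linarith [h.2])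

/-- Sign persistence: a continuous function positive at `a` that never vanishes
on `Ioo 0 T` stays positive. -/
lemma pos_of_pos_at {g : ℝ → ℝ} {T a t : ℝ}
    (hg : ContinuousOn g (Icc 0 T))
    (hne : ∀ u ∈ Ioo 0 T, g u ≠ 0)
    (ha : a ∈ Ico 0 T) (hga : 0 < g a) (ht : t ∈ Ioo 0 T) (hat : a ≤ t) : 0 < g t := by
  rcases lt_trichotomy (g t) 0 with h | h | h
  · exfalso
    have hsub : Icc a t ⊆ Icc 0 T := Icc_subset_Icc ha.1 ht.2.le
    have : (0:ℝ) ∈ Icc (g t) (g a) := ⟨h.le, hga.le⟩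
    obtain ⟨u, humem, hu⟩ := intermediate_value_Icc' hat (hg.mono hsub) this
    have hu0 : u ≠ a := fun he => by rw [he] at hu; exact ne_of_gt hga hu
    have hupos : 0 < u := by
      rcases eq_or_lt_of_le ha.1 with h0 | h0
      · exact lt_of_le_of_ne (h0 ▸ humem.1) (by rw [← h0] at hu0; exact Ne.symm hu0)
      · exact lt_of_lt_of_le h0 humem.1
    exact hne u ⟨hupos, lt_of_le_of_lt humem.2 ht.2⟩ hu
  · exact absurd h (hne t ht)
  · exact h

/-- A function with `g 0 = 0` and `g' 0 = 1` is positive somewhere in `(0, t]`. -/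
lemma exists_seed {g : ℝ → ℝ} (hg : HasDerivAt g 1 0) (hg0 : g 0 = 0) {t : ℝ} (ht : 0 < t) :
    ∃ s ∈ Ioc 0 t, 0 < g s := by
  have h1 := hasDerivAt_iff_tendsto_slope.mp hg
  have h2 : Tendsto (slope g 0) (𝓝[>] 0) (𝓝 1) :=
    h1.mono_left (nhdsWithin_mono _ (fun y hy => ne_of_gt hy))
  have h3 : ∀ᶠ s in 𝓝[>] (0:ℝ), 0 < slope g 0 s := h2.eventually (lt_mem_nhds zero_lt_one)
  have h4 : Ioc (0:ℝ) t ∈ 𝓝[>] (0:ℝ) := Ioc_mem_nhdsGT ht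
  obtain ⟨s, hs1, hs2⟩ := (h3.and (eventually_of_mem h4 (fun s hs => hs))).exists
  refine ⟨s, hs2, ?_⟩
  have hslope : slope g 0 s = g s / s := by
    rw [slope_def_field, hg0, sub_zero, sub_zero]
  rw [hslope] at hs1
  have := mul_pos hs1 hs2.1
  rwa [div_mul_cancel₀ _ (ne_of_gt hs2.1)] at this

/-- Upper barrier: once `θ < c` where `cos c = 0`, `sin c = -1`, it stays below `c`
(as long as `x > 0`). -/
lemma barrier_up {T : ℝ} {x r θ F : ℝ → ℝ} {n : ℕ}
    (hθ : ∀ t ∈ Icc 0 T, HasDerivAt θ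
      ((((n : ℝ) - 1) / r t - r t / 2 * F (x t ^ 2 + r t ^ 2)) * Real.cos (θ t)
        + x t / 2 * F (x t ^ 2 + r t ^ 2) * Real.sin (θ t)) t)
    (hx : ∀ t ∈ Ioo 0 T, 0 < x t) (hF : ∀ s, 0 < F s)
    {c : ℝ} (hc : Real.cos c = 0) (hcs : Real.sin c = -1)
    {t₀ : ℝ} (ht₀ : t₀ ∈ Ico 0 T) (h₀ : θ t₀ < c) :
    ∀ t ∈ Ico t₀ T, θ t < c := by
  intro t' ht'
  by_contra hcon
  push_neg at hcon
  have hθc : ContinuousOn θ (Icc 0 T) := fun u hu => (hθ u hu).continuousAt.continuousWithinAt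
  have hsub : Icc t₀ t' ⊆ Icc 0 T := Icc_subset_Icc ht₀.1 ht'.2.le
  set S : Set ℝ := Icc t₀ t' ∩ θ ⁻¹' (Ici c) with hSdef
  have hS_ne : t' ∈ S := ⟨⟨ht'.1, le_rfl⟩, hcon⟩
  have hS_cl : IsClosed S :=
    (hθc.mono hsub).preimage_isClosed_of_isClosed isClosed_Icc isClosed_Ici
  have hbd : BddBelow S := ⟨t₀, fun u hu => hu.1.1⟩
  set t₂ := sInf S with ht₂def
  have ht₂S : t₂ ∈ S := hS_cl.csInf_mem ⟨t', hS_ne⟩ hbd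
  have ht₂mem : t₂ ∈ Icc 0 T := hsub ht₂S.1
  have ht₀t₂ : t₀ < t₂ := by
    rcases eq_or_lt_of_le ht₂S.1.1 with h | h
    · exfalso; rw [← h] at ht₂S; exact absurd ht₂S.2 (not_le.mpr h₀)
    · exact h
  have hlt : ∀ u ∈ Ico t₀ t₂, θ u < c := by
    intro u hu
    by_contra h
    push_neg at h
    exact absurd (csInf_le hbd ⟨⟨hu.1, hu.2.le.trans ht₂S.1.2⟩, h⟩) (not_le.mpr hu.2)
  have hθt₂ : θ t₂ = c := by
    refine le_antisymm ?_ ht₂S.2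
    have htd : Tendsto θ (𝓝[<] t₂) (𝓝 (θ t₂)) :=
      ((hθ t₂ ht₂mem).continuousAt.tendsto).mono_left nhdsWithin_le_nhds
    have hev : ∀ᶠ u in 𝓝[<] t₂, θ u ≤ c :=
      eventually_of_mem (Ioo_mem_nhdsLT ht₀t₂)
        (fun u hu => (hlt u ⟨hu.1.le, hu.2⟩).le)
    exact le_of_tendsto htd hev
  have hxpos : 0 < x t₂ :=
    hx t₂ ⟨lt_of_le_of_lt ht₀.1 ht₀t₂, lt_of_le_of_lt ht₂S.1.2 ht'.2⟩
  set D := (((n : ℝ) - 1) / r t₂ - r t₂ / 2 * F (x t₂ ^ 2 + r t₂ ^ 2)) * Real.cos (θ t₂)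
      + x t₂ / 2 * F (x t₂ ^ 2 + r t₂ ^ 2) * Real.sin (θ t₂) with hD
  have hDneg : D < 0 := by
    rw [hD, hθt₂, hc, hcs]
    have hFp := hF (x t₂ ^ 2 + r t₂ ^ 2)
    nlinarith
  have hder : HasDerivAt θ D t₂ := hθ t₂ ht₂mem
  have hslope : Tendsto (slope θ t₂) (𝓝[<] t₂) (𝓝 D) :=
    (hasDerivAt_iff_tendsto_slope.mp hder).mono_left
      (nhdsWithin_mono _ (fun u hu => ne_of_lt hu))
  have hev2 : ∀ᶠ u in 𝓝[<] t₂, 0 ≤ slope θ t₂ u := by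
    refine eventually_of_mem (Ioo_mem_nhdsLT ht₀t₂) (fun u hu => ?_)
    have h1 : θ u < c := hlt u ⟨hu.1.le, hu.2⟩
    have h2 : slope θ t₂ u = (θ u - θ t₂) / (u - t₂) := slope_def_field θ t₂ u
    rw [h2, hθt₂]
    have hnum : θ u - c < 0 := by linarith
    have hden : u - t₂ < 0 := by linarith [hu.2]
    exact le_of_lt (div_pos_of_neg_of_neg hnum hden)
  have : 0 ≤ D := ge_of_tendsto hslope hev2
  linarith

/-- Lower barrier: once `θ > c` where `cos c = 0`, `sin c = 1`, it stays above `c`. -/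
lemma barrier_down {T : ℝ} {x r θ F : ℝ → ℝ} {n : ℕ}
    (hθ : ∀ t ∈ Icc 0 T, HasDerivAt θ
      ((((n : ℝ) - 1) / r t - r t / 2 * F (x t ^ 2 + r t ^ 2)) * Real.cos (θ t)
        + x t / 2 * F (x t ^ 2 + r t ^ 2) * Real.sin (θ t)) t)
    (hx : ∀ t ∈ Ioo 0 T, 0 < x t) (hF : ∀ s, 0 < F s)
    {c : ℝ} (hc : Real.cos c = 0) (hcs : Real.sin c = 1)
    {t₀ : ℝ} (ht₀ : t₀ ∈ Ico 0 T) (h₀ : c < θ t₀) :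
    ∀ t ∈ Ico t₀ T, c < θ t := by
  intro t' ht'
  by_contra hcon
  push_neg at hcon
  have hθc : ContinuousOn θ (Icc 0 T) := fun u hu => (hθ u hu).continuousAt.continuousWithinAt
  have hsub : Icc t₀ t' ⊆ Icc 0 T := Icc_subset_Icc ht₀.1 ht'.2.le
  set S : Set ℝ := Icc t₀ t' ∩ θ ⁻¹' (Iic c) with hSdef
  have hS_ne : t' ∈ S := ⟨⟨ht'.1, le_rfl⟩, hcon⟩
  have hS_cl : IsClosed S :=
    (hθc.mono hsub).preimage_isClosed_of_isClosed isClosed_Icc isClosed_Iic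
  have hbd : BddBelow S := ⟨t₀, fun u hu => hu.1.1⟩
  set t₂ := sInf S with ht₂def
  have ht₂S : t₂ ∈ S := hS_cl.csInf_mem ⟨t', hS_ne⟩ hbd
  have ht₂mem : t₂ ∈ Icc 0 T := hsub ht₂S.1
  have ht₀t₂ : t₀ < t₂ := by
    rcases eq_or_lt_of_le ht₂S.1.1 with h | h
    · exfalso; rw [← h] at ht₂S; exact absurd ht₂S.2 (not_le.mpr h₀)
    · exact h
  have hlt : ∀ u ∈ Ico t₀ t₂, c < θ u := by
    intro u hu
    by_contra h
    push_neg at h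
    exact absurd (csInf_le hbd ⟨⟨hu.1, hu.2.le.trans ht₂S.1.2⟩, h⟩) (not_le.mpr hu.2)
  have hθt₂ : θ t₂ = c := by
    refine le_antisymm ht₂S.2 ?_
    have htd : Tendsto θ (𝓝[<] t₂) (𝓝 (θ t₂)) :=
      ((hθ t₂ ht₂mem).continuousAt.tendsto).mono_left nhdsWithin_le_nhds
    have hev : ∀ᶠ u in 𝓝[<] t₂, c ≤ θ u :=
      eventually_of_mem (Ioo_mem_nhdsLT ht₀t₂)
        (fun u hu => (hlt u ⟨hu.1.le, hu.2⟩).le)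
    exact ge_of_tendsto htd hev
  have hxpos : 0 < x t₂ :=
    hx t₂ ⟨lt_of_le_of_lt ht₀.1 ht₀t₂, lt_of_le_of_lt ht₂S.1.2 ht'.2⟩
  set D := (((n : ℝ) - 1) / r t₂ - r t₂ / 2 * F (x t₂ ^ 2 + r t₂ ^ 2)) * Real.cos (θ t₂)
      + x t₂ / 2 * F (x t₂ ^ 2 + r t₂ ^ 2) * Real.sin (θ t₂) with hD
  have hDpos : 0 < D := by
    rw [hD, hθt₂, hc, hcs]
    have hFp := hF (x t₂ ^ 2 + r t₂ ^ 2)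
    nlinarith
  have hder : HasDerivAt θ D t₂ := hθ t₂ ht₂mem
  have hslope : Tendsto (slope θ t₂) (𝓝[<] t₂) (𝓝 D) :=
    (hasDerivAt_iff_tendsto_slope.mp hder).mono_left
      (nhdsWithin_mono _ (fun u hu => ne_of_lt hu))
  have hev2 : ∀ᶠ u in 𝓝[<] t₂, slope θ t₂ u ≤ 0 := by
    refine eventually_of_mem (Ioo_mem_nhdsLT ht₀t₂) (fun u hu => ?_)
    have h1 : c < θ u := hlt u ⟨hu.1.le, hu.2⟩
    have h2 : slope θ t₂ u = (θ u - θ t₂) / (u - t₂) := slope_def_field θ t₂ u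
    rw [h2, hθt₂]
    have hnum : 0 < θ u - c := by linarith
    have hden : u - t₂ < 0 := by linarith [hu.2]
    exact le_of_lt (div_neg_of_pos_of_neg hnum hden)
  have : D ≤ 0 := le_of_tendsto hslope hev2
  linarith

end SupXAux

lemma SupXAux.cos_3pi2 : Real.cos (3*Real.pi/2) = 0 := by
  rw [show 3*Real.pi/2 = Real.pi + Real.pi/2 by ring, Real.cos_add]
  simp

lemma SupXAux.sin_3pi2 : Real.sin (3*Real.pi/2) = -1 := by
  rw [show 3*Real.pi/2 = Real.pi + Real.pi/2 by ring, Real.sin_add]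
  simp

set_option maxHeartbeats 1000000 in
/-- If for every `R ≥ R*` the solution of (1.5)–(1.6) has a finite first exit
time `T R` with `x_R(T R) = 0`, then
`sup { x_R(t) : 0 < t < T R, R ∈ [R*, R*+1] } < +∞`. -/
theorem sup_x_finite
    (n : ℕ) (hn : 2 ≤ n) (m M : ℝ) (hm : 0 < m) (hmM : m ≤ M)
    (f : ℝ → ℝ) (hf : ContDiff ℝ 2 f)
    (hconv : ∀ s : ℝ, 0 ≤ deriv (deriv f) s)
    (hlow : ∀ s : ℝ, m ≤ deriv f s) (hup : ∀ s : ℝ, deriv f s ≤ M)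
    (Rstar : ℝ) (hRstar : 0 < Rstar)
    (X Rr Θ : ℝ → ℝ → ℝ) (T : ℝ → ℝ)
    (hsol : ∀ R ∈ Set.Ici Rstar,
      X R 0 = 0 ∧ Rr R 0 = R ∧ Θ R 0 = 0 ∧ 0 < T R ∧
      SolvesSystem n f (X R) (Rr R) (Θ R) (Set.Icc 0 (T R)) ∧
      NoExit (X R) (Rr R) (Θ R) (Set.Ioo 0 (T R)) ∧
      X R (T R) = 0) :
    ∃ B : ℝ, ∀ R ∈ Set.Icc Rstar (Rstar + 1), ∀ t ∈ Set.Ioo 0 (T R), X R t ≤ B := by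
  classical
  have hπ := Real.pi_pos
  set F := deriv f with hFdef
  have hF1 : ContDiff ℝ 1 F := by
    have h2 : ContDiff ℝ (1 + 1) f := by
      rw [show ((1:WithTop ℕ∞) + 1) = 2 by norm_num]
      exact hf
    exact (contDiff_succ_iff_deriv.mp h2).2.2
  have hFpos : ∀ s, 0 < F s := fun s => lt_of_lt_of_le hm (hlow s)
  set Z : ℝ → ℝ → ℝ × ℝ × ℝ := fun R t => (X R t, Rr R t, Θ R t) with hZdef
  -- continuity of the trajectories
  have hXcont : ∀ R ∈ Set.Ici Rstar, ContinuousOn (X R) (Icc 0 (T R)) := by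
    intro R hR
    obtain ⟨_, _, _, _, hS, _, _⟩ := hsol R hR
    exact fun u hu => (hS u hu).1.continuousAt.continuousWithinAt
  have hRcont : ∀ R ∈ Set.Ici Rstar, ContinuousOn (Rr R) (Icc 0 (T R)) := by
    intro R hR
    obtain ⟨_, _, _, _, hS, _, _⟩ := hsol R hR
    exact fun u hu => (hS u hu).2.1.continuousAt.continuousWithinAt
  have hΘcont : ∀ R ∈ Set.Ici Rstar, ContinuousOn (Θ R) (Icc 0 (T R)) := by
    intro R hR
    obtain ⟨_, _, _, _, hS, _, _⟩ := hsol R hR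
    exact fun u hu => (hS u hu).2.2.continuousAt.continuousWithinAt
  have hcont : ∀ R ∈ Set.Ici Rstar, ContinuousOn (Z R) (Icc 0 (T R)) := by
    intro R hR
    exact (hXcont R hR).prodMk ((hRcont R hR).prodMk (hΘcont R hR))
  -- positivity of x on the open interval
  have hxpos : ∀ R ∈ Set.Ici Rstar, ∀ t ∈ Ioo 0 (T R), 0 < X R t := by
    intro R hR t ht
    obtain ⟨hX0, hR0, hΘ0, hT, hS, hNE, hXT⟩ := hsol R hR
    have hd : HasDerivAt (X R) 1 0 := by
      have := (hS 0 ⟨le_rfl, hT.le⟩).1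
      rwa [hΘ0, Real.cos_zero] at this
    obtain ⟨s, hs, hgs⟩ := SupXAux.exists_seed hd hX0 ht.1
    exact SupXAux.pos_of_pos_at (hXcont R hR) (fun u hu => (hNE u hu).2.2.1)
      ⟨hs.1.le, lt_of_le_of_lt hs.2 ht.2⟩ hgs ht hs.2
  -- positivity of r
  have hrpos : ∀ R ∈ Set.Ici Rstar, ∀ t ∈ Ico 0 (T R), 0 < Rr R t := by
    intro R hR t ht
    obtain ⟨hX0, hR0, hΘ0, hT, hS, hNE, hXT⟩ := hsol R hR
    have hR0pos : 0 < Rr R 0 := by rw [hR0]; exact lt_of_lt_of_le hRstar hR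
    rcases eq_or_lt_of_le ht.1 with h0 | h0
    · rw [← h0]; exact hR0pos
    · exact SupXAux.pos_of_pos_at (hRcont R hR) (fun u hu => (hNE u hu).2.2.2)
        ⟨le_rfl, hT⟩ hR0pos ⟨h0, ht.2⟩ ht.1
  -- θ stays above -π
  have hθlow : ∀ R ∈ Set.Ici Rstar, ∀ t ∈ Ico 0 (T R), -Real.pi < Θ R t := by
    intro R hR t ht
    obtain ⟨hX0, hR0, hΘ0, hT, hS, hNE, hXT⟩ := hsol R hR
    rcases eq_or_lt_of_le ht.1 with h0 | h0
    · rw [← h0, hΘ0]; linarith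
    · by_contra h
      push_neg at h
      have hc : ContinuousOn (Θ R) (Icc 0 t) :=
        (hΘcont R hR).mono (Icc_subset_Icc le_rfl ht.2.le)
      have hmem : (-Real.pi) ∈ Icc (Θ R t) (Θ R 0) := ⟨h, by rw [hΘ0]; linarith⟩
      obtain ⟨u, hu, huv⟩ := intermediate_value_Icc' ht.1 hc hmem
      have hu0 : 0 < u := by
        rcases eq_or_lt_of_le hu.1 with h1 | h1
        · exfalso; rw [← h1, hΘ0] at huv; linarith [huv]
        · exact h1
      exact (hNE u ⟨hu0, lt_of_le_of_lt hu.2 ht.2⟩).2.1 huv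
  -- θ stays below 3π/2
  have hθhigh : ∀ R ∈ Set.Ici Rstar, ∀ t ∈ Ico 0 (T R), Θ R t < 3*Real.pi/2 := by
    intro R hR
    obtain ⟨hX0, hR0, hΘ0, hT, hS, hNE, hXT⟩ := hsol R hR
    exact SupXAux.barrier_up (fun u hu => (hS u hu).2.2) (hxpos R hR) hFpos
      SupXAux.cos_3pi2 SupXAux.sin_3pi2 ⟨le_rfl, hT⟩ (by rw [hΘ0]; linarith)
  -- the key local statement
  have key : ∀ R' ∈ Set.Icc Rstar (Rstar+1), ∃ ε > 0, ∃ B : ℝ,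
      ∀ R ∈ Set.Icc Rstar (Rstar+1), |R - R'| < ε → ∀ t ∈ Ioo 0 (T R), X R t ≤ B := by
    intro R' hR'mem
    have hR' : R' ∈ Set.Ici Rstar := hR'mem.1
    obtain ⟨hX0, hR0, hΘ0, hT, hS, hNE, hXT⟩ := hsol R' hR'
    -- a turning time t₁
    obtain ⟨t₁, ht₁, habs⟩ : ∃ t₁ ∈ Ioo 0 (T R'),
        Θ R' t₁ ∈ Ioo (-Real.pi) (-(Real.pi/2)) ∪ Ioo (Real.pi/2) (3*Real.pi/2) := by
      have hab : T R' / 2 < T R' := by linarith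
      have hcontx : ContinuousOn (X R') (Icc (T R'/2) (T R')) :=
        (hXcont R' hR').mono (Icc_subset_Icc (by linarith) le_rfl)
      have hderiv : ∀ u ∈ Ioo (T R'/2) (T R'), HasDerivAt (X R') (Real.cos (Θ R' u)) u :=
        fun u hu => (hS u ⟨by linarith [hu.1], hu.2.le⟩).1
      obtain ⟨c, hc, hceq⟩ := exists_hasDerivAt_eq_slope (X R') _ hab hcontx hderiv
      have hx2 : 0 < X R' (T R'/2) := hxpos R' hR' _ ⟨by linarith, hab⟩
      have hcosneg : Real.cos (Θ R' c) < 0 := by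
        rw [hceq, hXT]
        apply div_neg_of_neg_of_pos <;> linarith
      have hcmem : c ∈ Ico 0 (T R') := ⟨by linarith [hc.1], hc.2⟩
      have h1 := hθlow R' hR' c hcmem
      have h2 := hθhigh R' hR' c hcmem
      refine ⟨c, ⟨by linarith [hc.1], hc.2⟩, ?_⟩
      by_cases hγ : Θ R' c < -(Real.pi/2)
      · exact Or.inl ⟨h1, hγ⟩
      · push_neg at hγ
        have hg2 : Real.pi/2 < Θ R' c := by
          by_contra hg3
          push_neg at hg3
          exact absurd (Real.cos_nonneg_of_mem_Icc ⟨by linarith, hg3⟩) (not_le.mpr hcosneg)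
        exact Or.inr ⟨hg2, h2⟩
    -- bounds for the reference trajectory on [0, t₁]
    have hsub1 : Icc 0 t₁ ⊆ Icc 0 (T R') := Icc_subset_Icc le_rfl ht₁.2.le
    have hZc : ContinuousOn (Z R') (Icc 0 t₁) := (hcont R' hR').mono hsub1
    obtain ⟨C, hC⟩ := isCompact_Icc.exists_bound_of_continuousOn hZc
    have hC0 : 0 ≤ C := le_trans (norm_nonneg _) (hC 0 ⟨le_rfl, ht₁.1.le⟩)
    obtain ⟨tm, htm, hmin⟩ := isCompact_Icc.exists_isMinOn
      (⟨0, ⟨le_rfl, ht₁.1.le⟩⟩ : (Icc (0:ℝ) t₁).Nonempty) ((hRcont R' hR').mono hsub1)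
    set ρ := Rr R' tm with hρdef
    have hρpos : 0 < ρ := hrpos R' hR' tm ⟨htm.1, lt_of_le_of_lt htm.2 ht₁.2⟩
    have hrlow : ∀ u ∈ Icc 0 t₁, ρ ≤ Rr R' u := fun u hu => hmin hu
    -- a radius η around Θ R' t₁ inside the absorbing set
    have hopen : IsOpen (Ioo (-Real.pi) (-(Real.pi/2)) ∪ Ioo (Real.pi/2) (3*Real.pi/2)) :=
      isOpen_Ioo.union isOpen_Ioo
    obtain ⟨η, hη, hball⟩ := Metric.isOpen_iff.mp hopen _ habs
    set ε₀ := min 1 (min (ρ/2) (η/2)) with hε₀def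
    have hε₀pos : 0 < ε₀ := lt_min one_pos (lt_min (by linarith) (by linarith))
    have hε₀1 : ε₀ ≤ 1 := min_le_left _ _
    have hε₀ρ : ε₀ ≤ ρ/2 := le_trans (min_le_right _ _) (min_le_left _ _)
    have hε₀η : ε₀ ≤ η/2 := le_trans (min_le_right _ _) (min_le_right _ _)
    -- the compact convex box
    set A := C + 2 with hAdef
    set Kbox : Set (ℝ × ℝ × ℝ) := Icc (-A) A ×ˢ (Icc (ρ/2) A ×ˢ Icc (-A) A) with hKdef
    have hKconv : Convex ℝ Kbox :=
      (convex_Icc _ _).prod ((convex_Icc _ _).prod (convex_Icc _ _))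
    have hKcomp : IsCompact Kbox := isCompact_Icc.prod (isCompact_Icc.prod isCompact_Icc)
    have hKsub : Kbox ⊆ {p : ℝ × ℝ × ℝ | 0 < p.2.1} := by
      intro p hp
      have h1 := hp.2.1.1
      show 0 < p.2.1
      linarith
    obtain ⟨L, hL⟩ := SupXAux.vf_lipschitzOnWith n hF1 hKconv hKcomp hKsub
    -- componentwise distance bounds
    have hcomp : ∀ p q : ℝ × ℝ × ℝ, |p.1 - q.1| ≤ dist p q ∧ |p.2.1 - q.2.1| ≤ dist p q ∧
        |p.2.2 - q.2.2| ≤ dist p q := by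
      intro p q
      refine ⟨?_, ?_, ?_⟩
      · rw [← Real.dist_eq, Prod.dist_eq]; exact le_max_left _ _
      · rw [← Real.dist_eq, Prod.dist_eq]
        exact le_trans (by rw [Prod.dist_eq]; exact le_max_left _ _) (le_max_right _ _)
      · rw [← Real.dist_eq, Prod.dist_eq]
        exact le_trans (by rw [Prod.dist_eq]; exact le_max_right _ _) (le_max_right _ _)
    have hrefb : ∀ s ∈ Icc 0 t₁, |X R' s| ≤ C ∧ |Rr R' s| ≤ C ∧ |Θ R' s| ≤ C := by
      intro s hs
      refine ⟨?_, ?_, ?_⟩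
      · calc |X R' s| = ‖(Z R' s).1‖ := (Real.norm_eq_abs _).symm
          _ ≤ ‖Z R' s‖ := norm_fst_le _
          _ ≤ C := hC s hs
      · calc |Rr R' s| = ‖(Z R' s).2.1‖ := (Real.norm_eq_abs _).symm
          _ ≤ ‖(Z R' s).2‖ := norm_fst_le _
          _ ≤ ‖Z R' s‖ := norm_snd_le _
          _ ≤ C := hC s hs
      · calc |Θ R' s| = ‖(Z R' s).2.2‖ := (Real.norm_eq_abs _).symm
          _ ≤ ‖(Z R' s).2‖ := norm_snd_le _
          _ ≤ ‖Z R' s‖ := norm_snd_le _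
          _ ≤ C := hC s hs
    -- anything ε₀-close to the reference trajectory is in the box
    have hKmem : ∀ s ∈ Icc 0 t₁, ∀ p : ℝ × ℝ × ℝ, dist p (Z R' s) ≤ ε₀ → p ∈ Kbox := by
      intro s hs p hp
      obtain ⟨hp1, hp2, hp3⟩ := hcomp p (Z R' s)
      obtain ⟨hb1, hb2, hb3⟩ := hrefb s hs
      have hd1 : |p.1 - X R' s| ≤ ε₀ := le_trans hp1 hp
      have hd2 : |p.2.1 - Rr R' s| ≤ ε₀ := le_trans hp2 hp
      have hd3 : |p.2.2 - Θ R' s| ≤ ε₀ := le_trans hp3 hp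
      rw [abs_le] at hd1 hd2 hd3 hb1 hb2 hb3
      have hrl : ρ ≤ Rr R' s := hrlow s hs
      refine ⟨⟨?_, ?_⟩, ⟨?_, ?_⟩, ⟨?_, ?_⟩⟩ <;>
        linarith [hd1.1, hd1.2, hd2.1, hd2.2, hd3.1, hd3.2,
          hb1.1, hb1.2, hb2.1, hb2.2, hb3.1, hb3.2, hAdef]
    -- choose ε and B
    set δ₀ := ε₀/2 * Real.exp (-((L:ℝ) * t₁)) with hδdef
    have hδpos : 0 < δ₀ := by positivity
    have hδhalf : δ₀ ≤ ε₀/2 := by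
      have h1 : Real.exp (-((L:ℝ) * t₁)) ≤ 1 := by
        rw [Real.exp_le_one_iff]
        have := L.coe_nonneg
        nlinarith [ht₁.1]
      nlinarith
    refine ⟨δ₀, hδpos, C + 1, ?_⟩
    intro R hRmem hclose t ht
    have hRIci : R ∈ Set.Ici Rstar := hRmem.1
    obtain ⟨hX0', hR0', hΘ0', hT', hS', hNE', hXT'⟩ := hsol R hRIci
    set σ := min (T R) t₁ with hσdef
    have hσpos : 0 < σ := lt_min hT' ht₁.1
    have hσt₁ : σ ≤ t₁ := min_le_right _ _
    have hσT : σ ≤ T R := min_le_left _ _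
    have hz1 : Z R 0 = ((0:ℝ), R, (0:ℝ)) := by
      show ((X R 0, Rr R 0, Θ R 0) : ℝ × ℝ × ℝ) = ((0:ℝ), R, (0:ℝ))
      rw [hX0', hR0', hΘ0']
    have hz2 : Z R' 0 = ((0:ℝ), R', (0:ℝ)) := by
      show ((X R' 0, Rr R' 0, Θ R' 0) : ℝ × ℝ × ℝ) = ((0:ℝ), R', (0:ℝ))
      rw [hX0, hR0, hΘ0]
    have hdist0 : dist (Z R 0) (Z R' 0) = |R - R'| := by
      rw [hz1, hz2]
      simp [Prod.dist_eq, Real.dist_eq]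
    -- Grönwall closeness on [0, σ]
    have hclaim : ∀ s ∈ Icc 0 σ, dist (Z R s) (Z R' s) ≤ ε₀/2 := by
      by_contra hcon
      push_neg at hcon
      obtain ⟨sb, hsb, hbad⟩ := hcon
      have hdc : ContinuousOn (fun u => dist (Z R u) (Z R' u)) (Icc 0 σ) :=
        continuous_dist.comp_continuousOn
          (((hcont R hRIci).mono (Icc_subset_Icc le_rfl hσT)).prodMk
            ((hcont R' hR').mono (Icc_subset_Icc le_rfl (hσt₁.trans ht₁.2.le))))
      set Bad : Set ℝ := Icc 0 σ ∩ (fun u => dist (Z R u) (Z R' u)) ⁻¹' (Ici (ε₀/2))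
        with hBdef
      have hBne : Bad.Nonempty := ⟨sb, hsb, hbad.le⟩
      have hBcl : IsClosed Bad :=
        ContinuousOn.preimage_isClosed_of_isClosed hdc isClosed_Icc isClosed_Ici
      have hBbd : BddBelow Bad := ⟨0, fun u hu => hu.1.1⟩
      set t₂ := sInf Bad with ht₂def
      have ht₂B : t₂ ∈ Bad := hBcl.csInf_mem hBne hBbd
      have ht₂0 : 0 < t₂ := by
        rcases eq_or_lt_of_le ht₂B.1.1 with h | h
        · exfalso
          have h1 : ε₀/2 ≤ dist (Z R 0) (Z R' 0) := by
            have := ht₂B.2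
            rw [← h] at this
            exact this
          rw [hdist0] at h1
          linarith
        · exact h
      have hnotbad : ∀ u ∈ Ico 0 t₂, dist (Z R u) (Z R' u) < ε₀/2 := by
        intro u hu
        by_contra h
        push_neg at h
        exact absurd (csInf_le hBbd ⟨⟨hu.1, hu.2.le.trans ht₂B.1.2⟩, h⟩) (not_le.mpr hu.2)
      have hIcosub : ∀ u ∈ Ico (0:ℝ) t₂, u ∈ Icc 0 t₁ :=
        fun u hu => ⟨hu.1, le_trans hu.2.le (ht₂B.1.2.trans hσt₁)⟩
      have hder1 : ∀ u ∈ Ico (0:ℝ) t₂,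
          HasDerivWithinAt (Z R) (SupXAux.vf n F (Z R u)) (Ici u) u := by
        intro u hu
        have humem : u ∈ Icc 0 (T R) := ⟨hu.1, le_trans hu.2.le (ht₂B.1.2.trans hσT)⟩
        exact (((hS' u humem).1.prodMk ((hS' u humem).2.1.prodMk (hS' u humem).2.2))).hasDerivWithinAt
      have hder2 : ∀ u ∈ Ico (0:ℝ) t₂,
          HasDerivWithinAt (Z R') (SupXAux.vf n F (Z R' u)) (Ici u) u := by
        intro u hu
        have humem : u ∈ Icc 0 (T R') := hsub1 (hIcosub u hu)
        exact (((hS u humem).1.prodMk ((hS u humem).2.1.prodMk (hS u humem).2.2))).hasDerivWithinAt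
      have hmem1 : ∀ u ∈ Ico (0:ℝ) t₂, Z R u ∈ Kbox := fun u hu =>
        hKmem u (hIcosub u hu) _ (le_trans (hnotbad u hu).le (by linarith))
      have hmem2 : ∀ u ∈ Ico (0:ℝ) t₂, Z R' u ∈ Kbox := fun u hu =>
        hKmem u (hIcosub u hu) _ (by rw [dist_self]; exact hε₀pos.le)
      have hgron := dist_le_of_trajectories_ODE_of_mem
        (v := fun _ p => SupXAux.vf n F p) (s := fun _ => Kbox) (K := L)
        (fun _ _ => hL)
        ((hcont R hRIci).mono (Icc_subset_Icc le_rfl (le_trans ht₂B.1.2 hσT)))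
        hder1 hmem1
        ((hcont R' hR').mono (Icc_subset_Icc le_rfl ((ht₂B.1.2.trans hσt₁).trans ht₁.2.le)))
        hder2 hmem2
        (le_of_eq hdist0)
      have hfin := hgron t₂ ⟨ht₂0.le, le_rfl⟩
      have hexp : Real.exp ((L:ℝ) * (t₂ - 0)) ≤ Real.exp ((L:ℝ) * t₁) := by
        apply Real.exp_le_exp.mpr
        have h1 : t₂ ≤ t₁ := ht₂B.1.2.trans hσt₁
        have := L.coe_nonneg
        nlinarith
      have hlt2 : dist (Z R t₂) (Z R' t₂) < ε₀/2 := by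
        have h2 : |R - R'| * Real.exp ((L:ℝ) * (t₂-0)) ≤ |R - R'| * Real.exp ((L:ℝ) * t₁) :=
          mul_le_mul_of_nonneg_left hexp (abs_nonneg _)
        have h3 : |R - R'| * Real.exp ((L:ℝ) * t₁) < δ₀ * Real.exp ((L:ℝ) * t₁) :=
          mul_lt_mul_of_pos_right hclose (Real.exp_pos _)
        have h4 : δ₀ * Real.exp ((L:ℝ) * t₁) = ε₀/2 := by
          rw [hδdef, mul_assoc, ← Real.exp_add]
          simp
        calc dist (Z R t₂) (Z R' t₂) ≤ |R - R'| * Real.exp ((L:ℝ) * (t₂ - 0)) := hfin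
          _ ≤ |R - R'| * Real.exp ((L:ℝ) * t₁) := h2
          _ < δ₀ * Real.exp ((L:ℝ) * t₁) := h3
          _ = ε₀/2 := h4
      exact absurd ht₂B.2 (not_le.mpr hlt2)
    -- on [0, σ] the bound follows from closeness
    have hcompt : ∀ s ∈ Icc 0 σ, X R s ≤ C + 1 := by
      intro s hs
      have hd := (hcomp (Z R s) (Z R' s)).1
      have hb := (hrefb s ⟨hs.1, hs.2.trans hσt₁⟩).1
      have h1 : |X R s - X R' s| ≤ ε₀/2 := le_trans hd (hclaim s hs)
      rw [abs_le] at h1 hb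
      linarith [h1.2, hb.2]
    by_cases hcase : t ≤ σ
    · exact hcompt t ⟨ht.1.le, hcase⟩
    · push_neg at hcase
      have ht₁TR : t₁ < T R := by
        rcases min_cases (T R) t₁ with ⟨he, _⟩ | ⟨_, hlt⟩
        · exfalso
          rw [hσdef, he] at hcase
          linarith [ht.2]
        · exact hlt
      have hσeq : σ = t₁ := min_eq_right ht₁TR.le
      have ht₁t : t₁ < t := by rw [← hσeq]; exact hcase
      have hθcl : |Θ R t₁ - Θ R' t₁| ≤ ε₀/2 :=
        le_trans (hcomp (Z R t₁) (Z R' t₁)).2.2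
          (hclaim t₁ ⟨ht₁.1.le, le_of_eq hσeq.symm⟩)
      have habs' : Θ R t₁ ∈ Ioo (-Real.pi) (-(Real.pi/2)) ∪ Ioo (Real.pi/2) (3*Real.pi/2) := by
        apply hball
        rw [Metric.mem_ball, Real.dist_eq]
        calc |Θ R t₁ - Θ R' t₁| ≤ ε₀/2 := hθcl
          _ < η := by linarith
      have hXt₁ : X R t₁ ≤ C + 1 := hcompt t₁ ⟨ht₁.1.le, le_of_eq hσeq.symm⟩
      have ht₁Ico : t₁ ∈ Ico 0 (T R) := ⟨ht₁.1.le, ht₁TR⟩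
      have hcosneg : ∀ u ∈ Ico t₁ (T R), Real.cos (Θ R u) < 0 := by
        rcases habs' with h | h
        · intro u hu
          have hup := SupXAux.barrier_up (fun w hw => (hS' w hw).2.2) (hxpos R hRIci) hFpos
            (c := -(Real.pi/2)) (by simp) (by simp) ht₁Ico h.2 u hu
          have hlo := hθlow R hRIci u ⟨le_trans ht₁.1.le hu.1, hu.2⟩
          exact SupXAux.cos_neg_of_mem (Or.inl ⟨hlo, hup⟩)
        · intro u hu
          have hdn := SupXAux.barrier_down (fun w hw => (hS' w hw).2.2) (hxpos R hRIci) hFpos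
            (c := Real.pi/2) (by simp) (by simp) ht₁Ico h.1 u hu
          have hup := SupXAux.barrier_up (fun w hw => (hS' w hw).2.2) (hxpos R hRIci) hFpos
            (c := 3*Real.pi/2) SupXAux.cos_3pi2 SupXAux.sin_3pi2 ht₁Ico h.2 u hu
          exact SupXAux.cos_neg_of_mem (Or.inr ⟨hdn, hup⟩)
      have hcontx2 : ContinuousOn (X R) (Icc t₁ t) :=
        (hXcont R hRIci).mono (Icc_subset_Icc ht₁.1.le ht.2.le)
      have hderiv2 : ∀ u ∈ Ioo t₁ t, HasDerivAt (X R) (Real.cos (Θ R u)) u :=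
        fun u hu => (hS' u ⟨le_trans ht₁.1.le hu.1.le, le_trans hu.2.le ht.2.le⟩).1
      obtain ⟨c, hcmem, hceq⟩ := exists_hasDerivAt_eq_slope (X R) _ ht₁t hcontx2 hderiv2
      have hcneg := hcosneg c ⟨hcmem.1.le, lt_trans hcmem.2 ht.2⟩
      rw [hceq] at hcneg
      have hden : 0 < t - t₁ := by linarith
      have hnum : X R t - X R t₁ < 0 := by
        rcases div_neg_iff.mp hcneg with ⟨h1, h2⟩ | ⟨h1, h2⟩
        · linarith
        · exact h1
      linarith
  -- compactness wrap-up
  choose! ε hεpos B hB using key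
  have hcov : ∀ R0 ∈ Icc Rstar (Rstar+1), Metric.ball R0 (ε R0) ∈ 𝓝 R0 :=
    fun R0 h => Metric.ball_mem_nhds _ (hεpos R0 h)
  obtain ⟨tF, htFs, htFc⟩ :=
    isCompact_Icc.elim_nhds_subcover (fun R0 => Metric.ball R0 (ε R0)) hcov
  rcases tF.eq_empty_or_nonempty with he | hne
  · exfalso
    have h1 : Rstar ∈ Icc Rstar (Rstar+1) := ⟨le_rfl, by linarith⟩
    have h2 := htFc h1
    rw [he] at h2
    simp at h2
  · refine ⟨tF.sup' hne B, ?_⟩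
    intro R hR t ht
    have h2 := htFc hR
    rw [Set.mem_iUnion₂] at h2
    obtain ⟨R0, hR0F, hRb⟩ := h2
    have hd : |R - R0| < ε R0 := by rw [← Real.dist_eq]; exact hRb
    exact (hB R0 (htFs R0 hR0F) R hR hd t ht).trans (Finset.le_sup' B hR0F)
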